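/- arXiv:1402.2597 — 2 statements merged into one kernel-verified Lean document; each statement's English description precedes it below -/
import Mathlib

section
/- Let 𝔓 be a simplicial affine convex polygonal semigroup such that int(𝒞) = int(𝔓̄). Then 𝔓 is Buchsbaum if and only if 𝔓̄ ∩ τ_j is generated by a single element for j = 1, 2. -/
open Set
open scoped Pointwise

/-- Coercion of a lattice point of `ℕ²` into `ℚ²`. -/
def toQ (x : Fin 2 → ℕ) : Fin 2 → ℚ := fun i => (x i : ℚ)

/-- The rational cone `L_{ℚ≥}(G)` generated by a subset `G ⊆ ℚ²`. -/
def coneQ (G : Set (Fin 2 → ℚ)) : Set (Fin 2 → ℚ) :=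
  {x | ∃ (n : ℕ) (q : Fin n → ℚ) (f : Fin n → (Fin 2 → ℚ)),
    (∀ i, 0 ≤ q i) ∧ (∀ i, f i ∈ G) ∧ x = ∑ i, q i • f i}

/-- The ray from the origin through `v ∈ ℚ²`. -/
def rayQ (v : Fin 2 → ℚ) : Set (Fin 2 → ℚ) := {x | ∃ q : ℚ, 0 ≤ q ∧ x = q • v}

/-- The lattice points on the ray from the origin through `v`. -/
def rayN (v : Fin 2 → ℕ) : Set (Fin 2 → ℕ) := {x | toQ x ∈ rayQ (toQ v)}

/-- Square of the Euclidean norm of a lattice point. -/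
def normSq (x : Fin 2 → ℕ) : ℕ := x 0 ^ 2 + x 1 ^ 2

/-- The cone `𝒞 = L_{ℚ≥}(S) ∩ ℕ²` of a subsemigroup `S ⊆ ℕ²`. -/
def coneN (S : Set (Fin 2 → ℕ)) : Set (Fin 2 → ℕ) := {x | toQ x ∈ coneQ (toQ '' S)}

/-- The interior `int(X)` of `X` relative to the extremal rays through `v1, v2`. -/
def interiorOf (X : Set (Fin 2 → ℕ)) (v1 v2 : Fin 2 → ℕ) : Set (Fin 2 → ℕ) :=
  X \ (rayN v1 ∪ rayN v2)

/-- `S̄ = {a ∈ ℕ² : a + g ∈ S for every generator g ∈ G}`. -/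
def sbar (S : Set (Fin 2 → ℕ)) (G : Finset (Fin 2 → ℕ)) : Set (Fin 2 → ℕ) :=
  {a | ∀ g ∈ G, a + g ∈ S}

/-- `n` is the nonzero element of minimal (Euclidean) norm of `T` on the ray `τ`. -/
def IsMinOnRay (T τ : Set (Fin 2 → ℕ)) (n : Fin 2 → ℕ) : Prop :=
  n ∈ T ∩ τ ∧ n ≠ 0 ∧ ∀ m ∈ T ∩ τ, m ≠ 0 → normSq n ≤ normSq m

/-- The Cohen–Macaulay criterion for a simplicial semigroup `T ⊆ ℕ²` with cone `C`
and extremal rays `τ1, τ2`: for the minimal elements `n1, n2` of `T` on the two rays,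
every `a ∈ C \ T` satisfies `a + n1 ∉ T` or `a + n2 ∉ T`. -/
def IsCMsg (T C τ1 τ2 : Set (Fin 2 → ℕ)) : Prop :=
  ∃ n1 n2 : Fin 2 → ℕ, IsMinOnRay T τ1 n1 ∧ IsMinOnRay T τ2 n2 ∧
    ∀ a ∈ C \ T, a + n1 ∉ T ∨ a + n2 ∉ T

/-- `S` is Buchsbaum iff (Rosales) the semigroup `S̄` is Cohen–Macaulay. -/
def IsBuchsbaumSG (S : Set (Fin 2 → ℕ)) (G : Finset (Fin 2 → ℕ))
    (C τ1 τ2 : Set (Fin 2 → ℕ)) : Prop :=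
  IsCMsg (sbar S G) C τ1 τ2

/-- A subsemigroup of `ℕ²` is generated by a single element. -/
def genByOne (T : Set (Fin 2 → ℕ)) : Prop :=
  ∃ n : Fin 2 → ℕ, T = {x | ∃ k : ℕ, x = k • n}

/-- The circle semigroup of the circle (disk) of center `(a,b)` and radius `r`. -/
def circleSG (a b r : ℝ) : Set (Fin 2 → ℕ) :=
  {x | ∃ i : ℕ, ((x 0 : ℝ) - i * a) ^ 2 + ((x 1 : ℝ) - i * b) ^ 2 ≤ (i * r) ^ 2}

/-- The convex body semigroup `⋃ i, (i·F ∩ ℕ²)` of a convex body `F ⊆ ℚ²`. -/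
def polySG (F : Set (Fin 2 → ℚ)) : Set (Fin 2 → ℕ) :=
  {x | ∃ i : ℕ, toQ x ∈ (i : ℚ) • F}

/-- `G` is a minimal generating set of the semigroup `S`. -/
def minimalGenSet (S : Set (Fin 2 → ℕ)) (G : Finset (Fin 2 → ℕ)) : Prop :=
  (AddSubmonoid.closure (G : Set (Fin 2 → ℕ)) : Set (Fin 2 → ℕ)) = S ∧
  ∀ g ∈ G, g ∉ (AddSubmonoid.closure ((G.erase g : Finset (Fin 2 → ℕ)) :
    Set (Fin 2 → ℕ)) : Set (Fin 2 → ℕ))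

/-- `S` is simplicial with extremal rays through `v1` and `v2`. -/
def Simplicial (S : Set (Fin 2 → ℕ)) (v1 v2 : Fin 2 → ℕ) : Prop :=
  v1 ≠ 0 ∧ v2 ≠ 0 ∧ rayN v1 ≠ rayN v2 ∧
  coneQ (toQ '' S) = coneQ {toQ v1, toQ v2}

lemma toQ_eq_zero {x : Fin 2 → ℕ} : toQ x = 0 ↔ x = 0 := by
  constructor
  · intro h; funext i
    have := congrFun h i
    simpa [toQ] using this
  · rintro rfl; funext i; simp [toQ]

lemma toQ_add (x y : Fin 2 → ℕ) : toQ (x + y) = toQ x + toQ y := by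
  funext i; simp [toQ]

lemma toQ_smul (k : ℕ) (x : Fin 2 → ℕ) : toQ (k • x) = (k : ℚ) • toQ x := by
  funext i; simp [toQ]

lemma normSq_smul (k : ℕ) (x : Fin 2 → ℕ) : normSq (k • x) = k ^ 2 * normSq x := by
  simp [normSq]; ring

lemma mem_rayN {v x : Fin 2 → ℕ} : x ∈ rayN v ↔ ∃ q : ℚ, 0 ≤ q ∧ toQ x = q • toQ v :=
  Iff.rfl

lemma rayN_self (v : Fin 2 → ℕ) : v ∈ rayN v := ⟨1, by norm_num, (one_smul _ _).symm⟩

lemma zero_mem_rayN (v : Fin 2 → ℕ) : (0 : Fin 2 → ℕ) ∈ rayN v :=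
  ⟨0, le_refl _, by rw [toQ_eq_zero.2 rfl, zero_smul]⟩

lemma rayN_add {v x y : Fin 2 → ℕ} (hx : x ∈ rayN v) (hy : y ∈ rayN v) :
    x + y ∈ rayN v := by
  obtain ⟨q, hq, hxq⟩ := hx
  obtain ⟨r, hr, hyr⟩ := hy
  exact ⟨q + r, by positivity, by rw [toQ_add, hxq, hyr, add_smul]⟩

lemma rayN_nsmul {v x : Fin 2 → ℕ} (hx : x ∈ rayN v) (k : ℕ) : k • x ∈ rayN v := by
  obtain ⟨q, hq, hxq⟩ := hx
  exact ⟨k * q, by positivity, by rw [toQ_smul, hxq, smul_smul]⟩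

/-- positive scalar of ray member, with positivity of the coefficient when nonzero. -/
lemma rayN_coeff_pos {v x : Fin 2 → ℕ} (hx : x ∈ rayN v) (hx0 : x ≠ 0) :
    ∃ q : ℚ, 0 < q ∧ toQ x = q • toQ v := by
  obtain ⟨q, hq, hxq⟩ := hx
  rcases hq.lt_or_eq with h | h
  · exact ⟨q, h, hxq⟩
  · exfalso; apply hx0; apply toQ_eq_zero.1; rw [hxq, ← h, zero_smul]

/-- If `toQ v2` is a scalar multiple of `toQ v1` then the rays agree (when `v2 ≠ 0`). -/
lemma no_scalar {v1 v2 : Fin 2 → ℕ} (hv2 : v2 ≠ 0) (hne : rayN v1 ≠ rayN v2)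
    (c : ℚ) : toQ v2 ≠ c • toQ v1 := by
  intro h
  -- c > 0
  have hex : ∃ i, v2 i ≠ 0 := by
    by_contra hc; push_neg at hc; exact hv2 (funext fun i => hc i)
  obtain ⟨i, hi⟩ := hex
  have h2i : (0 : ℚ) < (v2 i : ℚ) := by exact_mod_cast Nat.pos_of_ne_zero hi
  have hci : (v2 i : ℚ) = c * (v1 i : ℚ) := congrFun h i
  have hc : 0 < c := by
    rcases le_or_gt c 0 with hc | hc
    · exfalso
      have : c * (v1 i : ℚ) ≤ 0 := mul_nonpos_of_nonpos_of_nonneg hc (by positivity)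
      rw [← hci] at this; linarith
    · exact hc
  apply hne
  ext x
  simp only [mem_rayN]
  constructor
  · rintro ⟨q, hq, hxq⟩
    refine ⟨q / c, by positivity, ?_⟩
    rw [h, smul_smul, div_mul_cancel₀ _ hc.ne', hxq]
  · rintro ⟨q, hq, hxq⟩
    exact ⟨q * c, by positivity, by rw [hxq, h, smul_smul]⟩
lemma mem_coneQ_pair {w1 w2 x : Fin 2 → ℚ} :
    x ∈ coneQ {w1, w2} ↔ ∃ a b : ℚ, 0 ≤ a ∧ 0 ≤ b ∧ x = a • w1 + b • w2 := by
  constructor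
  · rintro ⟨n, q, f, hq, hf, rfl⟩
    classical
    refine ⟨∑ i ∈ Finset.univ.filter (fun i => f i = w1), q i,
            ∑ i ∈ Finset.univ.filter (fun i => ¬ f i = w1), q i,
            Finset.sum_nonneg fun i _ => hq i, Finset.sum_nonneg fun i _ => hq i, ?_⟩
    rw [Finset.sum_smul, Finset.sum_smul,
        ← Finset.sum_filter_add_sum_filter_not Finset.univ (fun i => f i = w1)]
    congr 1
    · exact Finset.sum_congr rfl fun i hi => by
        rw [(Finset.mem_filter.1 hi).2]
    · exact Finset.sum_congr rfl fun i hi => by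
        have h1 := (Finset.mem_filter.1 hi).2
        have h2 := hf i
        simp only [Set.mem_insert_iff, Set.mem_singleton_iff] at h2
        rcases h2 with h2 | h2
        · exact absurd h2 h1
        · rw [h2]
  · rintro ⟨a, b, ha, hb, rfl⟩
    refine ⟨2, ![a, b], ![w1, w2], ?_, ?_, ?_⟩
    · intro i; fin_cases i <;> simpa
    · intro i; fin_cases i <;> simp
    · simp [Fin.sum_univ_two]
section SG
variable {S : Set (Fin 2 → ℕ)} {G : Finset (Fin 2 → ℕ)}

lemma S_add (hG : minimalGenSet S G) {a b : Fin 2 → ℕ}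
    (ha : a ∈ S) (hb : b ∈ S) : a + b ∈ S := by
  rw [← hG.1] at ha hb ⊢
  exact add_mem ha hb

lemma S_zero (hG : minimalGenSet S G) : (0 : Fin 2 → ℕ) ∈ S := by
  rw [← hG.1]; exact zero_mem _

lemma G_sub_S (hG : minimalGenSet S G) {g : Fin 2 → ℕ} (hg : g ∈ G) : g ∈ S := by
  rw [← hG.1]; exact AddSubmonoid.subset_closure hg

lemma zero_not_mem_G (hG : minimalGenSet S G) : (0 : Fin 2 → ℕ) ∉ G := by
  intro h0
  exact hG.2 0 h0 (zero_mem _)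

/-- every nonzero element of `S` decomposes as generator + element of `S`. -/
lemma S_decomp (hG : minimalGenSet S G) {x : Fin 2 → ℕ} (hx : x ∈ S) (hx0 : x ≠ 0) :
    ∃ g ∈ G, ∃ u ∈ S, x = g + u := by
  rw [← hG.1] at hx
  have key : x = 0 ∨ ∃ g ∈ G, ∃ u ∈ S, x = g + u := by
    refine AddSubmonoid.closure_induction
      (motive := fun y _ => y = 0 ∨ ∃ g ∈ G, ∃ u ∈ S, y = g + u) ?_ ?_ ?_ hx
    · intro y hy
      exact Or.inr ⟨y, hy, 0, S_zero hG, (add_zero y).symm⟩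
    · exact Or.inl rfl
    · rintro y z hy hz (rfl | ⟨g, hg, u, hu, rfl⟩) hz'
      · simpa using hz'
      · exact Or.inr ⟨g, hg, u + z, S_add hG hu (hG.1 ▸ hz), by rw [add_assoc]⟩
  exact key.resolve_left hx0

lemma sbar_zero (hG : minimalGenSet S G) : (0 : Fin 2 → ℕ) ∈ sbar S G := by
  intro g hg; rw [zero_add]; exact G_sub_S hG hg

lemma sbar_add_S (hG : minimalGenSet S G) {a s : Fin 2 → ℕ}
    (ha : a ∈ sbar S G) (hs : s ∈ S) : a + s ∈ sbar S G := by
  intro g hg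
  rw [add_assoc, add_comm s g, ← add_assoc]
  exact S_add hG (ha g hg) hs

/-- `a ∈ S̄` and `s ∈ S` nonzero implies `a + s ∈ S`. -/
lemma sbar_add_S_mem (hG : minimalGenSet S G) {a s : Fin 2 → ℕ}
    (ha : a ∈ sbar S G) (hs : s ∈ S) (hs0 : s ≠ 0) : a + s ∈ S := by
  obtain ⟨g, hg, u, hu, rfl⟩ := S_decomp hG hs hs0
  rw [← add_assoc]
  exact S_add hG (ha g hg) hu

lemma sbar_add (hG : minimalGenSet S G) {a b : Fin 2 → ℕ}
    (ha : a ∈ sbar S G) (hb : b ∈ sbar S G) : a + b ∈ sbar S G := by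
  intro g hg
  rw [add_assoc]
  have hbg : b + g ∈ S := hb g hg
  have hg0 : g ≠ 0 := fun h => zero_not_mem_G hG (h ▸ hg)
  have : b + g ≠ 0 := by
    intro h
    apply hg0
    funext i
    have := congrFun h i
    simp only [Pi.add_apply, Pi.zero_apply, Nat.add_eq_zero] at this
    exact this.2
  exact sbar_add_S_mem hG ha hbg this

lemma sbar_nsmul (hG : minimalGenSet S G) {a : Fin 2 → ℕ}
    (ha : a ∈ sbar S G) (k : ℕ) : k • a ∈ sbar S G := by
  induction k with
  | zero => simpa using sbar_zero hG
  | succ n ih => rw [succ_nsmul]; exact sbar_add hG ih ha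

end SG
section Geom
variable {S : Set (Fin 2 → ℕ)} {v1 v2 : Fin 2 → ℕ}

lemma mem_coneN_iff (hsimp : Simplicial S v1 v2) {x : Fin 2 → ℕ} :
    x ∈ coneN S ↔ ∃ a b : ℚ, 0 ≤ a ∧ 0 ≤ b ∧ toQ x = a • toQ v1 + b • toQ v2 := by
  unfold coneN
  rw [Set.mem_setOf_eq, hsimp.2.2.2, mem_coneQ_pair]

lemma rayN1_sub_coneN (hsimp : Simplicial S v1 v2) {x : Fin 2 → ℕ}
    (hx : x ∈ rayN v1) : x ∈ coneN S := by
  obtain ⟨q, hq, hxq⟩ := hx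
  exact (mem_coneN_iff hsimp).2 ⟨q, 0, hq, le_refl _, by rw [hxq, zero_smul, add_zero]⟩

lemma rayN2_sub_coneN (hsimp : Simplicial S v1 v2) {x : Fin 2 → ℕ}
    (hx : x ∈ rayN v2) : x ∈ coneN S := by
  obtain ⟨q, hq, hxq⟩ := hx
  exact (mem_coneN_iff hsimp).2 ⟨0, q, le_refl _, hq, by rw [hxq, zero_smul, zero_add]⟩

/-- Key interior lemma: a nonzero point of one ray plus a nonzero point of the other
ray lies in the interior of the cone. -/
lemma sum_mem_interior (hsimp : Simplicial S v1 v2) {a n : Fin 2 → ℕ}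
    (ha : a ∈ rayN v1) (ha0 : a ≠ 0) (hn : n ∈ rayN v2) (hn0 : n ≠ 0) :
    a + n ∈ interiorOf (coneN S) v1 v2 := by
  obtain ⟨hv1, hv2, hne, _⟩ := hsimp
  obtain ⟨q1, hq1, ha1⟩ := rayN_coeff_pos ha ha0
  obtain ⟨q2, hq2, hn2⟩ := rayN_coeff_pos hn hn0
  have hsum : toQ (a + n) = q1 • toQ v1 + q2 • toQ v2 := by
    rw [toQ_add, ha1, hn2]
  refine ⟨(mem_coneN_iff ⟨hv1, hv2, hne, ‹_›⟩).2 ⟨q1, q2, hq1.le, hq2.le, hsum⟩, ?_⟩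
  rintro (h | h)
  · obtain ⟨q, hq, hxq⟩ := h
    apply no_scalar hv2 hne ((q - q1) / q2)
    have : q2 • toQ v2 = (q - q1) • toQ v1 := by
      have := hxq.symm.trans hsum
      funext i
      have := congrFun this i
      simp only [Pi.smul_apply, smul_eq_mul, Pi.add_apply] at this ⊢
      linarith
    funext i
    have := congrFun this i
    simp only [Pi.smul_apply, smul_eq_mul] at this ⊢
    field_simp
    linarith
  · obtain ⟨q, hq, hxq⟩ := h
    apply no_scalar hv1 (Ne.symm hne) ((q - q2) / q1)
    have : q1 • toQ v1 = (q - q2) • toQ v2 := by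
      have := hxq.symm.trans hsum
      funext i
      have := congrFun this i
      simp only [Pi.smul_apply, smul_eq_mul, Pi.add_apply] at this ⊢
      linarith
    funext i
    have := congrFun this i
    simp only [Pi.smul_apply, smul_eq_mul] at this ⊢
    field_simp
    linarith

end Geom
lemma subset_coneQ {G : Set (Fin 2 → ℚ)} {x : Fin 2 → ℚ} (hx : x ∈ G) : x ∈ coneQ G :=
  ⟨1, ![1], ![x], fun i => by fin_cases i <;> norm_num,
    fun i => by fin_cases i <;> simpa, by simp⟩

section Extremal
variable {S : Set (Fin 2 → ℕ)} {v1 v2 : Fin 2 → ℕ}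

/-- `S` contains a nonzero element of the extremal ray `τ₁`. -/
lemma exists_ray_elt (hsimp : Simplicial S v1 v2) :
    ∃ s ∈ S, s ∈ rayN v1 ∧ s ≠ 0 := by
  obtain ⟨hv1, hv2, hne, hcone⟩ := hsimp
  have hv1mem : toQ v1 ∈ coneQ (toQ '' S) := by
    rw [hcone]
    exact subset_coneQ (Set.mem_insert _ _)
  obtain ⟨n, q, f, hq, hf, hsum⟩ := hv1mem
  -- decompose each f i
  choose s hsS hfs using hf
  have hfab : ∀ i, ∃ a b : ℚ, 0 ≤ a ∧ 0 ≤ b ∧ f i = a • toQ v1 + b • toQ v2 := by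
    intro i
    have : f i ∈ coneQ {toQ v1, toQ v2} := by
      rw [← hcone]
      exact subset_coneQ ⟨s i, hsS i, hfs i⟩
    exact mem_coneQ_pair.1 this
  choose a b ha hb hab using hfab
  set A : ℚ := ∑ i, q i * a i with hA
  set B : ℚ := ∑ i, q i * b i with hB
  have hmain : toQ v1 = A • toQ v1 + B • toQ v2 := by
    have : ∑ i, q i • f i = A • toQ v1 + B • toQ v2 := by
      rw [hA, hB, Finset.sum_smul, Finset.sum_smul, ← Finset.sum_add_distrib]
      refine Finset.sum_congr rfl fun i _ => ?_
      rw [hab i, smul_add, smul_smul, smul_smul]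
    exact hsum.trans this
  have hAnn : 0 ≤ A := Finset.sum_nonneg fun i _ => mul_nonneg (hq i) (ha i)
  have hBnn : 0 ≤ B := Finset.sum_nonneg fun i _ => mul_nonneg (hq i) (hb i)
  have hB0 : B = 0 := by
    by_contra hB0
    have hBpos : 0 < B := hBnn.lt_of_ne (Ne.symm hB0)
    apply no_scalar hv2 hne ((1 - A) / B)
    funext i
    have := congrFun hmain i
    simp only [Pi.smul_apply, smul_eq_mul, Pi.add_apply] at this ⊢
    field_simp
    linarith
  have hA1 : A = 1 := by
    have hex : ∃ i, v1 i ≠ 0 := by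
      by_contra hc; push_neg at hc; exact hv1 (funext fun i => hc i)
    obtain ⟨i, hi⟩ := hex
    have h1 : (0:ℚ) < (v1 i : ℚ) := by exact_mod_cast Nat.pos_of_ne_zero hi
    have := congrFun hmain i
    simp only [Pi.smul_apply, smul_eq_mul, Pi.add_apply, hB0, zero_mul] at this
    have : (v1 i : ℚ) = A * (v1 i : ℚ) := by
      simp only [hA] at this
      simpa [toQ] using this
    nlinarith
  -- some term is positive
  have hterm0 : ∀ i ∈ Finset.univ, q i * b i = 0 := by
    rw [← hB] at *
    exact (Finset.sum_eq_zero_iff_of_nonneg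
      (fun i _ => mul_nonneg (hq i) (hb i))).1 hB0
  have hexi : ∃ i, q i * a i ≠ 0 := by
    by_contra hc; push_neg at hc
    have : A = 0 := Finset.sum_eq_zero fun i _ => hc i
    rw [hA1] at this; norm_num at this
  obtain ⟨i, hi⟩ := hexi
  have hqi : 0 < q i := (hq i).lt_of_ne fun h => hi (by rw [← h, zero_mul])
  have hai : 0 < a i := by
    rcases (ha i).lt_or_eq with h | h
    · exact h
    · exact absurd (by rw [← h, mul_zero]) hi
  have hbi : b i = 0 := by
    have := hterm0 i (Finset.mem_univ i)
    rcases mul_eq_zero.1 this with h | h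
    · exact absurd h hqi.ne'
    · exact h
  refine ⟨s i, hsS i, ⟨a i, hai.le, ?_⟩, ?_⟩
  · rw [hfs i, hab i, hbi, zero_smul, add_zero]
  · intro h0
    have : f i = 0 := by rw [← hfs i, h0, toQ_eq_zero.2 rfl]
    rw [hab i, hbi, zero_smul, add_zero] at this
    apply hv1
    apply toQ_eq_zero.1
    funext j
    have := congrFun this j
    simp only [Pi.smul_apply, smul_eq_mul, Pi.zero_apply] at this
    have := mul_eq_zero.1 this
    rcases this with h | h
    · exact absurd h hai.ne'
    · simpa using h

end Extremal
lemma interiorOf_comm (X : Set (Fin 2 → ℕ)) (v1 v2 : Fin 2 → ℕ) :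
    interiorOf X v1 v2 = interiorOf X v2 v1 := by
  unfold interiorOf; rw [Set.union_comm]

lemma Simplicial.symm {S : Set (Fin 2 → ℕ)} {v1 v2 : Fin 2 → ℕ}
    (h : Simplicial S v1 v2) : Simplicial S v2 v1 :=
  ⟨h.2.1, h.1, (h.2.2.1).symm, by rw [h.2.2.2, Set.pair_comm]⟩

section Main
variable {S : Set (Fin 2 → ℕ)} {G : Finset (Fin 2 → ℕ)} {v1 v2 : Fin 2 → ℕ}

lemma normSq_pos_aux {v : Fin 2 → ℕ} (hv : v ≠ 0) :
    0 < (v 0 : ℚ) ^ 2 + (v 1 : ℚ) ^ 2 := by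
  have hex : v 0 ≠ 0 ∨ v 1 ≠ 0 := by
    by_contra hc; push_neg at hc
    exact hv (funext fun i => by fin_cases i <;> simp [hc.1, hc.2])
  rcases hex with hi | hi
  · have : (0:ℚ) < (v 0 : ℚ) := by exact_mod_cast Nat.pos_of_ne_zero hi
    nlinarith [sq_nonneg (v 1 : ℚ)]
  · have : (0:ℚ) < (v 1 : ℚ) := by exact_mod_cast Nat.pos_of_ne_zero hi
    nlinarith [sq_nonneg (v 0 : ℚ)]

lemma forward_ray (hG : minimalGenSet S G) (hsimp : Simplicial S v1 v2)
    (hint : interiorOf (coneN S) v1 v2 = interiorOf (sbar S G) v1 v2)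
    {n1 n2 : Fin 2 → ℕ}
    (h1 : IsMinOnRay (sbar S G) (rayN v1) n1)
    (h2 : IsMinOnRay (sbar S G) (rayN v2) n2)
    (hCM : ∀ a ∈ coneN S \ sbar S G, a + n1 ∉ sbar S G ∨ a + n2 ∉ sbar S G) :
    genByOne (sbar S G ∩ rayN v1) := by
  refine ⟨n1, ?_⟩
  ext m
  simp only [Set.mem_inter_iff, Set.mem_setOf_eq]
  constructor
  · rintro ⟨hmS, hmray⟩
    -- strong induction on normSq m
    have H : ∀ N : ℕ, ∀ m : Fin 2 → ℕ, normSq m = N → m ∈ sbar S G → m ∈ rayN v1 →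
        ∃ k : ℕ, m = k • n1 := by
      intro N
      induction N using Nat.strong_induction_on with
      | _ N ih =>
        intro m hN hmS hmray
        by_cases hm0 : m = 0
        · exact ⟨0, by rw [hm0, zero_smul]⟩
        obtain ⟨qm, hqm, hmq⟩ := rayN_coeff_pos hmray hm0
        obtain ⟨qn, hqn, hnq⟩ := rayN_coeff_pos h1.1.2 h1.2.1
        have hm0' : ∀ i, (m i : ℚ) = qm * (v1 i : ℚ) := fun i => congrFun hmq i
        have hn0' : ∀ i, (n1 i : ℚ) = qn * (v1 i : ℚ) := fun i => congrFun hnq i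
        set Nv : ℚ := (v1 0 : ℚ) ^ 2 + (v1 1 : ℚ) ^ 2 with hNv
        have hNvpos : 0 < Nv := normSq_pos_aux hsimp.1
        have hmN : (normSq m : ℚ) = qm ^ 2 * Nv := by
          rw [hNv]; push_cast [normSq]; rw [hm0' 0, hm0' 1]; ring
        have hnN : (normSq n1 : ℚ) = qn ^ 2 * Nv := by
          rw [hNv]; push_cast [normSq]; rw [hn0' 0, hn0' 1]; ring
        have hns : normSq n1 ≤ normSq m := h1.2.2 m ⟨hmS, hmray⟩ hm0
        have hnsQ : (normSq n1 : ℚ) ≤ (normSq m : ℚ) := by exact_mod_cast hns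
        have hle : qn ≤ qm := by
          have h2 : qn ^ 2 * Nv ≤ qm ^ 2 * Nv := by rw [← hnN, ← hmN]; exact hnsQ
          have h3 : qn ^ 2 ≤ qm ^ 2 := le_of_mul_le_mul_right h2 hNvpos
          nlinarith
        have hcomp : ∀ i, n1 i ≤ m i := by
          intro i
          have h1q : (n1 i : ℚ) ≤ (m i : ℚ) := by
            rw [hm0' i, hn0' i]
            have : (0:ℚ) ≤ (v1 i : ℚ) := by positivity
            nlinarith
          exact_mod_cast h1q
        set m' : Fin 2 → ℕ := m - n1 with hm'def
        have hm'add : m' + n1 = m := funext fun i => Nat.sub_add_cancel (hcomp i)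
        have hm'Q : toQ m' = (qm - qn) • toQ v1 := by
          funext i
          have : (m' i : ℚ) = (m i : ℚ) - (n1 i : ℚ) := by
            have he : (m - n1) i = m i - n1 i := rfl
            rw [hm'def, he, Nat.cast_sub (hcomp i)]
          simp only [toQ, Pi.smul_apply, smul_eq_mul]
          rw [this, hm0' i, hn0' i]; ring
        have hm'ray : m' ∈ rayN v1 := ⟨qm - qn, by linarith, hm'Q⟩
        have hm'S : m' ∈ sbar S G := by
          by_cases h0 : m' = 0
          · rw [h0]; exact sbar_zero hG
          by_contra hnot
          rcases hCM m' ⟨rayN1_sub_coneN hsimp hm'ray, hnot⟩ with h | h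
          · exact h (hm'add ▸ hmS)
          · have hin := sum_mem_interior hsimp hm'ray h0 h2.1.2 h2.2.1
            rw [hint] at hin
            exact h hin.1
        have hm'N : (normSq m' : ℚ) = (qm - qn) ^ 2 * Nv := by
          rw [hNv]; push_cast [normSq]
          have e0 := congrFun hm'Q 0
          have e1 := congrFun hm'Q 1
          simp only [toQ, Pi.smul_apply, smul_eq_mul] at e0 e1
          rw [e0, e1]; ring
        have hlt : normSq m' < normSq m := by
          have : (normSq m' : ℚ) < (normSq m : ℚ) := by
            rw [hm'N, hmN]
            have h4 : (qm - qn) ^ 2 < qm ^ 2 := by nlinarith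
            exact mul_lt_mul_of_pos_right h4 hNvpos
          exact_mod_cast this
        obtain ⟨k, hk⟩ := ih (normSq m') (hN ▸ hlt) m' rfl hm'S hm'ray
        exact ⟨k + 1, by rw [← hm'add, hk, succ_nsmul]⟩
    exact H (normSq m) m rfl hmS hmray
  · rintro ⟨k, rfl⟩
    exact ⟨sbar_nsmul hG h1.1.1 k, rayN_nsmul h1.1.2 k⟩

end Main
section Back
variable {S : Set (Fin 2 → ℕ)} {G : Finset (Fin 2 → ℕ)} {v1 v2 : Fin 2 → ℕ}

lemma S_sub_sbar (hG : minimalGenSet S G) {s : Fin 2 → ℕ} (hs : s ∈ S) :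
    s ∈ sbar S G := fun g hg => S_add hG hs (G_sub_S hG hg)

lemma add_eq_zero_right {x y : Fin 2 → ℕ} (h : x + y = 0) : y = 0 := by
  funext i
  have := congrFun h i
  simp only [Pi.add_apply, Pi.zero_apply, Nat.add_eq_zero] at this
  exact this.2

/-- Construct `IsMinOnRay` data and the "no-return" property from `genByOne`. -/
lemma min_of_genByOne (hG : minimalGenSet S G) (hsimp : Simplicial S v1 v2)
    {m1 : Fin 2 → ℕ} (hm1 : sbar S G ∩ rayN v1 = {x | ∃ k : ℕ, x = k • m1}) :
    IsMinOnRay (sbar S G) (rayN v1) m1 ∧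
      ∀ a ∈ rayN v1, a ∉ sbar S G → a + m1 ∉ sbar S G := by
  have hm1T : m1 ∈ sbar S G ∩ rayN v1 := by
    rw [hm1]; exact ⟨1, (one_smul ℕ m1).symm⟩
  have hm10 : m1 ≠ 0 := by
    obtain ⟨s, hsS, hsray, hs0⟩ := exists_ray_elt hsimp
    have : s ∈ sbar S G ∩ rayN v1 := ⟨S_sub_sbar hG hsS, hsray⟩
    rw [hm1] at this
    obtain ⟨k, hk⟩ := this
    intro h0
    apply hs0
    rw [hk, h0, smul_zero]
  refine ⟨⟨hm1T, hm10, ?_⟩, ?_⟩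
  · intro m hm hm0
    have : m ∈ {x | ∃ k : ℕ, x = k • m1} := hm1 ▸ hm
    obtain ⟨k, rfl⟩ := this
    have hk0 : k ≠ 0 := by rintro rfl; simp at hm0
    rw [normSq_smul]
    calc normSq m1 = 1 * normSq m1 := (one_mul _).symm
      _ ≤ k ^ 2 * normSq m1 :=
        Nat.mul_le_mul_right _ (Nat.one_le_iff_ne_zero.2 (pow_ne_zero _ hk0))
  · intro a haray hanot hmem
    have : a + m1 ∈ sbar S G ∩ rayN v1 := ⟨hmem, rayN_add haray hm1T.2⟩
    rw [hm1] at this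
    obtain ⟨k, hk⟩ := this
    rcases k with _ | j
    · rw [zero_smul] at hk
      exact hm10 (add_eq_zero_right hk)
    · rw [succ_nsmul] at hk
      have ha : a = j • m1 := by
        have := hk
        exact add_right_cancel this
      apply hanot
      have : a ∈ sbar S G ∩ rayN v1 := by rw [hm1]; exact ⟨j, ha⟩
      exact this.1

lemma backward_dir (hG : minimalGenSet S G) (hsimp : Simplicial S v1 v2)
    (hint : interiorOf (coneN S) v1 v2 = interiorOf (sbar S G) v1 v2)
    (hgen1 : genByOne (sbar S G ∩ rayN v1)) (hgen2 : genByOne (sbar S G ∩ rayN v2)) :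
    IsCMsg (sbar S G) (coneN S) (rayN v1) (rayN v2) := by
  obtain ⟨m1, hm1⟩ := hgen1
  obtain ⟨m2, hm2⟩ := hgen2
  obtain ⟨hmin1, hno1⟩ := min_of_genByOne hG hsimp hm1
  obtain ⟨hmin2, hno2⟩ := min_of_genByOne hG hsimp.symm hm2
  refine ⟨m1, m2, hmin1, hmin2, ?_⟩
  rintro a ⟨haC, hanot⟩
  have haray : a ∈ rayN v1 ∪ rayN v2 := by
    by_contra hc
    have : a ∈ interiorOf (coneN S) v1 v2 := ⟨haC, hc⟩
    rw [hint] at this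
    exact hanot this.1
  rcases haray with h | h
  · exact Or.inl (hno1 a h hanot)
  · exact Or.inr (hno2 a h hanot)

end Back
/-- Let `𝔓` be a simplicial affine convex polygonal semigroup
with `int(𝒞) = int(𝔓̄)`. Then `𝔓` is Buchsbaum iff `𝔓̄ ∩ τ_j` is generated by a
single element for `j = 1, 2`. -/
theorem stmt17 (t : ℕ) (P : Fin t → (Fin 2 → ℚ)) (hpos : ∀ j i, 0 ≤ P j i)
    (hnseg : ¬ Collinear ℚ (Set.range P))
    (S : Set (Fin 2 → ℕ)) (hS : S = polySG (convexHull ℚ (Set.range P)))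
    (G : Finset (Fin 2 → ℕ)) (hG : minimalGenSet S G)
    (v1 v2 : Fin 2 → ℕ) (hsimp : Simplicial S v1 v2)
    (hint : interiorOf (coneN S) v1 v2 = interiorOf (sbar S G) v1 v2) :
    IsBuchsbaumSG S G (coneN S) (rayN v1) (rayN v2) ↔
      genByOne (sbar S G ∩ rayN v1) ∧ genByOne (sbar S G ∩ rayN v2) := by

  constructor
  · rintro ⟨n1, n2, h1, h2, hCM⟩
    refine ⟨forward_ray hG hsimp hint h1 h2 hCM, ?_⟩
    have hint' : interiorOf (coneN S) v2 v1 = interiorOf (sbar S G) v2 v1 := by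
      rw [interiorOf_comm (coneN S) v2 v1, hint, interiorOf_comm]
    exact forward_ray hG hsimp.symm hint' h2 h1 (fun a ha => (hCM a ha).symm)
  · rintro ⟨hg1, hg2⟩
    exact backward_dir hG hsimp hint hg1 hg2
end

section
/- Let F ⊂ ℝ^2_{≥0} be a compact convex polygon and 𝔓 its simplicial affine convex polygonal semigroup. Suppose F ∩ τ_1 is a point P_1 and F ∩ τ_2 is a point P_d, and let Q be the intersection of the lines ν_1 and ν_2 (the lines along which consecutive dilated boundary sides near τ_1 and τ_2 intersect). Then the sets Υ \ 𝔓 and Υ \ 𝔓̄ are finite, where Υ = (Q + L_{ℚ≥}(F)) ∩ ℕ^2. -/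
open Set
open scoped Pointwise

/-- The intersection `h·[P1,Pt] ∩ (h+1)·[P1,P2]` of consecutive dilated sides. -/
def crossSet (P1 Pt P2 : Fin 2 → ℚ) (h : ℕ) : Set (Fin 2 → ℚ) :=
  segment ℚ ((h : ℚ) • P1) ((h : ℚ) • Pt) ∩
    segment ℚ (((h : ℚ) + 1) • P1) (((h : ℚ) + 1) • P2)

/-- The region `ℬ = {D + λ·n : D ∈ [j·P1, V], λ ∈ ℚ_{≥0}} ∩ C`. -/
def stripB (P1 V : Fin 2 → ℚ) (j : ℕ) (n : Fin 2 → ℕ) (C : Set (Fin 2 → ℕ)) :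
    Set (Fin 2 → ℕ) :=
  {x | (∃ D ∈ segment ℚ ((j : ℚ) • P1) V, ∃ l : ℚ, 0 ≤ l ∧ toQ x = D + l • toQ n) ∧
    x ∈ C}

/-- A (affine) line in `ℚ²`. -/
def IsLine (ν : Set (Fin 2 → ℚ)) : Prop :=
  ∃ p d : Fin 2 → ℚ, d ≠ 0 ∧ ν = {y | ∃ s : ℚ, y = p + s • d}

/-- The corner region `Υ_i = ConvexHull({O, j·P1, V, ν ∩ τ}) ∩ ℕ²`. -/
def Ups (j : ℕ) (P1 V W : Fin 2 → ℚ) : Set (Fin 2 → ℕ) :=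
  {x | toQ x ∈ convexHull ℚ {0, (j : ℚ) • P1, V, W}}

/-- The translated-cone region `Υ = (Q + L_{ℚ≥}(F)) ∩ ℕ²`. -/
def UpsMain (Qpt : Fin 2 → ℚ) (F : Set (Fin 2 → ℚ)) : Set (Fin 2 → ℕ) :=
  {x | ∃ y ∈ coneQ F, toQ x = Qpt + y}


section AuxStmt19

lemma coneQ_subset' {G T : Set (Fin 2 → ℚ)} (hGT : G ⊆ T) (h0 : (0 : Fin 2 → ℚ) ∈ T)
    (hadd : ∀ u ∈ T, ∀ v ∈ T, u + v ∈ T)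
    (hsmul : ∀ (q : ℚ), 0 ≤ q → ∀ u ∈ T, q • u ∈ T) : coneQ G ⊆ T := by
  rintro x ⟨n, q, f, hq, hf, rfl⟩
  induction n with
  | zero => simpa using h0
  | succ n ih =>
      rw [Fin.sum_univ_succ]
      exact hadd _ (hsmul _ (hq 0) _ (hGT (hf 0))) _
        (ih (fun i => q i.succ) (fun i => f i.succ) (fun i => hq i.succ) (fun i => hf i.succ))

lemma mem_coneQ' {G : Set (Fin 2 → ℚ)} {g : Fin 2 → ℚ} (hg : g ∈ G) : g ∈ coneQ G :=
  ⟨1, fun _ => 1, fun _ => g, fun _ => zero_le_one, fun _ => hg, by simp⟩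

lemma cover' {F : Set (Fin 2 → ℚ)} (hF : Convex ℚ F) {A B w w' : Fin 2 → ℚ}
    (hA : A ∈ F) (hB : B ∈ F) (hw : w ∈ F) (hw' : w' ∈ F) {j : ℕ} (hj : 0 < j)
    {V : Fin 2 → ℚ} (hV : V = ((j : ℚ) + 1) • w) (hV' : V = (j : ℚ) • w')
    {z : Fin 2 → ℚ} {X b : ℚ} (hX : 0 ≤ X) (hb : 0 ≤ b)
    (hz : z = V + X • A + b • B) :
    ∃ i : ℕ, z ∈ (i : ℚ) • F := by
  have hj1 : (1 : ℚ) ≤ (j : ℚ) := by exact_mod_cast hj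
  set q : ℚ := X + b + (j : ℚ) with hqdef
  have hq1 : 1 ≤ q := by linarith
  have hq0 : 0 ≤ q := by linarith
  set i : ℕ := ⌈q⌉₊ with hidef
  have hiq : q ≤ (i : ℚ) := Nat.le_ceil q
  have hiq' : (i : ℚ) < q + 1 := Nat.ceil_lt_add_one hq0
  have hi0 : (0 : ℚ) < (i : ℚ) := by linarith
  have hine : (i : ℚ) ≠ 0 := ne_of_gt hi0
  set μ : ℚ := (i : ℚ) - q with hμdef
  have hμ0 : 0 ≤ μ := by simp [hμdef]; linarith
  have hμ1 : μ ≤ 1 := by simp [hμdef]; linarith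
  refine ⟨i, ?_⟩
  set c1 : ℚ := X / i
  set c2 : ℚ := ((j : ℚ) + 1) * μ / i
  set c3 : ℚ := (j : ℚ) * (1 - μ) / i
  set c4 : ℚ := b / i
  have hc1 : 0 ≤ c1 := div_nonneg hX hi0.le
  have hc2 : 0 ≤ c2 := div_nonneg (mul_nonneg (by linarith) hμ0) hi0.le
  have hc3 : 0 ≤ c3 := div_nonneg (mul_nonneg (by linarith) (by linarith)) hi0.le
  have hc4 : 0 ≤ c4 := div_nonneg hb hi0.le
  have hsum : c1 + c2 + c3 + c4 = 1 := by
    have hiqμ : (i : ℚ) = q + μ := by rw [hμdef]; ring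
    have hc_eq : c1 + c2 + c3 + c4 = (X + ((j : ℚ) + 1) * μ + (j : ℚ) * (1 - μ) + b) / i := by
      simp only [c1, c2, c3, c4]; ring
    rw [hc_eq, div_eq_one_iff_eq hine]
    linear_combination -hiqμ - hqdef
  have hfmem : c1 • A + c2 • w + c3 • w' + c4 • B ∈ F := by
    have h12 : c1 + c2 + c3 + c4 = 1 := hsum
    have := hF.sum_mem (t := (Finset.univ : Finset (Fin 4)))
      (w := ![c1, c2, c3, c4]) (z := ![A, w, w', B])
      (fun k _ => by fin_cases k <;> simpa)
      (by rw [Fin.sum_univ_four]; simpa using h12)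
      (fun k _ => by fin_cases k <;> simpa)
    rw [Fin.sum_univ_four] at this
    simpa using this
  refine Set.mem_smul_set.2 ⟨_, hfmem, ?_⟩
  rw [hz]
  funext k
  have hwk : V k = ((j : ℚ) + 1) * w k := by rw [hV]; simp
  have hw'k : V k = (j : ℚ) * w' k := by rw [hV']; simp
  simp only [Pi.smul_apply, Pi.add_apply, smul_eq_mul, c1, c2, c3, c4]
  field_simp
  linear_combination μ * hwk.symm + (1 - μ) * hw'k.symm

lemma segment_translate' {A B V : Fin 2 → ℚ} {r k m : ℚ}
    (hr : 0 < r) (hk : 0 ≤ k) (hm : r + k = m)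
    (hV : V ∈ segment ℚ (r • A) (r • B)) :
    V + k • A ∈ segment ℚ (m • A) (m • B) := by
  obtain ⟨u, v, hu, hv, huv, heq⟩ := hV
  have hm0 : 0 < m := by linarith
  refine ⟨1 - v * r / m, v * r / m, ?_, by positivity, by ring, ?_⟩
  · have h1 : v * r ≤ m := by nlinarith
    rw [sub_nonneg]
    exact (div_le_one hm0).2 h1
  · funext kk
    have hc := congrFun heq kk
    simp only [Pi.add_apply, Pi.smul_apply, smul_eq_mul] at hc ⊢
    have hmm : m * m⁻¹ = 1 := mul_inv_cancel₀ hm0.ne'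
    linear_combination hc - r * A kk * huv - A kk * hm + v * r * (B kk - A kk) * hmm

end AuxStmt19

/-- If `F` meets each extremal ray in a single vertex and `Q` is
the intersection of the lines `ν_1, ν_2`, then `Υ \ 𝔓` and `Υ \ 𝔓̄` are finite,
where `Υ = (Q + L_{ℚ≥}(F)) ∩ ℕ²`. -/
theorem stmt19
    (t : ℕ) (P : Fin t → (Fin 2 → ℚ)) (hpos : ∀ j i, 0 ≤ P j i)
    (i1 it i2 d1 e1 e2 : Fin t)
    (S : Set (Fin 2 → ℕ)) (hS : S = polySG (convexHull ℚ (Set.range P)))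
    (G : Finset (Fin 2 → ℕ)) (hG : minimalGenSet S G)
    (v1 v2 : Fin 2 → ℕ) (hsimp : Simplicial S v1 v2)
    (hP1 : convexHull ℚ (Set.range P) ∩ rayQ (toQ v1) = {P i1})
    (hPd : convexHull ℚ (Set.range P) ∩ rayQ (toQ v2) = {P d1})
    (hedge1 : IsExtreme ℚ (convexHull ℚ (Set.range P)) (segment ℚ (P i1) (P it)))
    (hedge2 : IsExtreme ℚ (convexHull ℚ (Set.range P)) (segment ℚ (P i1) (P i2)))
    (hedge3 : IsExtreme ℚ (convexHull ℚ (Set.range P)) (segment ℚ (P d1) (P e1)))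
    (hedge4 : IsExtreme ℚ (convexHull ℚ (Set.range P)) (segment ℚ (P d1) (P e2)))
    (j1 j2 : ℕ) (hj1 : 0 < j1) (hj2 : 0 < j2)
    (hj1le : ∀ j' : ℕ, 0 < j' → (crossSet (P i1) (P it) (P i2) j').Nonempty → j1 ≤ j')
    (hj2le : ∀ j' : ℕ, 0 < j' → (crossSet (P d1) (P e1) (P e2) j').Nonempty → j2 ≤ j')
    (V1 V2 : Fin 2 → ℚ)
    (hV1 : crossSet (P i1) (P it) (P i2) j1 = {V1})
    (hV2 : crossSet (P d1) (P e1) (P e2) j2 = {V2})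
    (n1 n2 : Fin 2 → ℕ)
    (hn1 : IsMinOnRay S (rayN v1) n1) (hn2 : IsMinOnRay S (rayN v2) n2)
    (nu1 nu2 : Set (Fin 2 → ℚ)) (hl1 : IsLine nu1) (hl2 : IsLine nu2)
    (hnu1 : ∀ h : ℕ, j1 ≤ h → crossSet (P i1) (P it) (P i2) h ⊆ nu1)
    (hnu2 : ∀ h : ℕ, j2 ≤ h → crossSet (P d1) (P e1) (P e2) h ⊆ nu2)
    (W1 W2 : Fin 2 → ℚ)
    (hW1 : nu1 ∩ rayQ (toQ v2) = {W1}) (hW2 : nu2 ∩ rayQ (toQ v1) = {W2})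
    (Qpt : Fin 2 → ℚ) (hQ : nu1 ∩ nu2 = {Qpt})
    :
    (UpsMain Qpt (convexHull ℚ (Set.range P)) \ S).Finite ∧
      (UpsMain Qpt (convexHull ℚ (Set.range P)) \ sbar S G).Finite := by
  classical
  obtain ⟨hv1ne, hv2ne, hrayne, hconeS⟩ := hsimp
  set F := convexHull ℚ (Set.range P) with hFdef
  have hFconv : Convex ℚ F := convex_convexHull ℚ _
  have hPmem : ∀ jj, P jj ∈ F := fun jj => subset_convexHull ℚ _ ⟨jj, rfl⟩
  have htoQne : ∀ v : Fin 2 → ℕ, v ≠ 0 → toQ v ≠ 0 := by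
    intro v hv hc
    apply hv; funext k
    have := congrFun hc k
    simpa [toQ] using this
  -- `K0` : the cone over `F`
  set K0 : Set (Fin 2 → ℚ) := {z | ∃ c : ℚ, ∃ f ∈ F, 0 ≤ c ∧ z = c • f} with hK0def
  have hSK0 : coneQ (toQ '' S) ⊆ K0 := by
    apply coneQ_subset'
    · rintro _ ⟨x, hxS, rfl⟩
      rw [hS] at hxS
      obtain ⟨i, hi⟩ := hxS
      obtain ⟨f, hf, hfx⟩ := Set.mem_smul_set.1 hi
      exact ⟨i, f, hf, Nat.cast_nonneg i, hfx.symm⟩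
    · exact ⟨0, P i1, hPmem i1, le_refl 0, (zero_smul ℚ _).symm⟩
    · rintro _ ⟨c, f, hf, hc, rfl⟩ _ ⟨c', f', hf', hc', rfl⟩
      rcases eq_or_lt_of_le (add_nonneg hc hc' : (0:ℚ) ≤ c + c') with hcc | hcc
      · have hc0 : c = 0 := by linarith
        have hc'0 : c' = 0 := by linarith
        refine ⟨0, P i1, hPmem i1, le_refl 0, ?_⟩
        simp [hc0, hc'0]
      · have hccne : c + c' ≠ 0 := hcc.ne'
        refine ⟨c + c', (c/(c+c')) • f + (c'/(c+c')) • f', ?_, hcc.le, ?_⟩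
        · exact hFconv hf hf' (by positivity) (by positivity) (by field_simp)
        · funext k
          simp only [Pi.add_apply, Pi.smul_apply, smul_eq_mul]
          field_simp <;> ring
    · rintro q hq _ ⟨c, f, hf, hc, rfl⟩
      exact ⟨q * c, f, hf, mul_nonneg hq hc, smul_smul q c f⟩
  -- the extremal directions are multiples of `P i1` and `P d1`
  obtain ⟨c1q, f1, hf1F, hc1nn, hf1⟩ :=
    hSK0 (show toQ v1 ∈ coneQ (toQ '' S) by rw [hconeS]; exact mem_coneQ' (by simp))
  have hc1pos : 0 < c1q :=
    hc1nn.lt_of_ne (fun h => htoQne v1 hv1ne (by rw [hf1, ← h, zero_smul]))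
  have hf1P : f1 = P i1 := by
    have hm : f1 ∈ F ∩ rayQ (toQ v1) := by
      refine ⟨hf1F, c1q⁻¹, by positivity, ?_⟩
      rw [hf1, smul_smul, inv_mul_cancel₀ hc1pos.ne', one_smul]
    rw [hP1] at hm; exact hm
  have hpi1 : toQ v1 = c1q • P i1 := by rw [hf1, hf1P]
  obtain ⟨c2q, f2, hf2F, hc2nn, hf2⟩ :=
    hSK0 (show toQ v2 ∈ coneQ (toQ '' S) by rw [hconeS]; exact mem_coneQ' (by simp))
  have hc2pos : 0 < c2q :=
    hc2nn.lt_of_ne (fun h => htoQne v2 hv2ne (by rw [hf2, ← h, zero_smul]))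
  have hf2P : f2 = P d1 := by
    have hm : f2 ∈ F ∩ rayQ (toQ v2) := by
      refine ⟨hf2F, c2q⁻¹, by positivity, ?_⟩
      rw [hf2, smul_smul, inv_mul_cancel₀ hc2pos.ne', one_smul]
    rw [hPd] at hm; exact hm
  have hpi2 : toQ v2 = c2q • P d1 := by rw [hf2, hf2P]
  -- `K1` : the cone generated by `P i1` and `P d1`
  set K1 : Set (Fin 2 → ℚ) :=
    {z | ∃ a b : ℚ, 0 ≤ a ∧ 0 ≤ b ∧ z = a • P i1 + b • P d1} with hK1def
  have hK10 : (0 : Fin 2 → ℚ) ∈ K1 := ⟨0, 0, le_refl 0, le_refl 0, by simp⟩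
  have hK1add : ∀ u ∈ K1, ∀ v ∈ K1, u + v ∈ K1 := by
    rintro _ ⟨a, b, ha, hb, rfl⟩ _ ⟨a', b', ha', hb', rfl⟩
    refine ⟨a + a', b + b', by linarith, by linarith, ?_⟩
    funext k; simp only [Pi.add_apply, Pi.smul_apply, smul_eq_mul]; ring
  have hK1smul : ∀ q : ℚ, 0 ≤ q → ∀ u ∈ K1, q • u ∈ K1 := by
    rintro q hq _ ⟨a, b, ha, hb, rfl⟩
    refine ⟨q * a, q * b, mul_nonneg hq ha, mul_nonneg hq hb, ?_⟩
    funext k; simp only [Pi.add_apply, Pi.smul_apply, smul_eq_mul]; ring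
  have hK1conv : Convex ℚ K1 := by
    rintro _ ⟨a, b, ha, hb, rfl⟩ _ ⟨a', b', ha', hb', rfl⟩ u v hu hv huv
    refine ⟨u * a + v * a', u * b + v * b', by positivity, by positivity, ?_⟩
    funext k; simp only [Pi.add_apply, Pi.smul_apply, smul_eq_mul]; ring
  have hSK1 : coneQ (toQ '' S) ⊆ K1 := by
    rw [hconeS]
    apply coneQ_subset' ?_ hK10 hK1add hK1smul
    rintro z (hz | hz)
    · exact ⟨c1q, 0, hc1pos.le, le_refl 0, by rw [hz, hpi1]; simp⟩
    · simp only [Set.mem_singleton_iff] at hz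
      exact ⟨0, c2q, le_refl 0, hc2pos.le, by rw [hz, hpi2]; simp⟩
  have hPK1 : ∀ jj, P jj ∈ K1 := by
    intro jj
    set N : ℕ := (P jj 0).den * (P jj 1).den with hNdef
    have hN0 : 0 < N := Nat.mul_pos (P jj 0).pos (P jj 1).pos
    have hNQ : ((N : ℕ) : ℚ) ≠ 0 := by positivity
    set x : Fin 2 → ℕ :=
      ![(P jj 0).num.toNat * (P jj 1).den, (P jj 1).num.toNat * (P jj 0).den] with hxdef
    have hnum : ∀ k2 : Fin 2, ((P jj k2).num : ℚ) = P jj k2 * (P jj k2).den := by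
      intro k2
      have hd : ((P jj k2).den : ℚ) ≠ 0 := by
        exact_mod_cast (P jj k2).den_ne_zero
      have h := Rat.num_div_den (P jj k2)
      rw [div_eq_iff hd] at h
      rw [h]
    have hxQ : toQ x = (N : ℚ) • P jj := by
      funext k
      have ht0 : (((P jj 0).num.toNat : ℕ) : ℚ) = ((P jj 0).num : ℚ) := by
        exact_mod_cast congrArg (fun z : ℤ => (z : ℚ))
          (Int.toNat_of_nonneg (Rat.num_nonneg.2 (hpos jj 0)))
      have ht1 : (((P jj 1).num.toNat : ℕ) : ℚ) = ((P jj 1).num : ℚ) := by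
        exact_mod_cast congrArg (fun z : ℤ => (z : ℚ))
          (Int.toNat_of_nonneg (Rat.num_nonneg.2 (hpos jj 1)))
      fin_cases k
      · show (((P jj 0).num.toNat * (P jj 1).den : ℕ) : ℚ) = ((N : ℚ)) * P jj 0
        rw [hNdef, Nat.cast_mul, Nat.cast_mul, ht0, hnum 0]
        ring
      · show (((P jj 1).num.toNat * (P jj 0).den : ℕ) : ℚ) = ((N : ℚ)) * P jj 1
        rw [hNdef, Nat.cast_mul, Nat.cast_mul, ht1, hnum 1]
        ring
    have hxS : x ∈ S := by
      rw [hS]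
      exact ⟨N, Set.mem_smul_set.2 ⟨P jj, hPmem jj, hxQ.symm⟩⟩
    have hxK1 : toQ x ∈ K1 := hSK1 (mem_coneQ' ⟨x, hxS, rfl⟩)
    have hsc := hK1smul ((N : ℚ))⁻¹ (by positivity) _ hxK1
    rw [hxQ, smul_smul, inv_mul_cancel₀ hNQ, one_smul] at hsc
    exact hsc
  have hFK1 : F ⊆ K1 := by
    rw [hFdef]
    exact convexHull_min (by rintro _ ⟨jj, rfl⟩; exact hPK1 jj) hK1conv
  have hconeF : coneQ F ⊆ K1 := coneQ_subset' hFK1 hK10 hK1add hK1smul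
  -- decompositions of `V1`, `V2`
  have hVdecomp : ∀ (Aq Bq V : Fin 2 → ℚ) (m : ℚ), Aq ∈ F → Bq ∈ F →
      V ∈ segment ℚ (m • Aq) (m • Bq) → ∃ w ∈ F, V = m • w := by
    intro Aq Bq V m hA hB hseg
    obtain ⟨u, v, hu, hv, huv, heq⟩ := hseg
    refine ⟨u • Aq + v • Bq, hFconv hA hB hu hv huv, ?_⟩
    rw [← heq]
    funext k; simp only [Pi.add_apply, Pi.smul_apply, smul_eq_mul]; ring
  have hV1mem : V1 ∈ crossSet (P i1) (P it) (P i2) j1 := by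
    rw [hV1]; exact Set.mem_singleton _
  obtain ⟨hV1s1, hV1s2⟩ := hV1mem
  have hV2mem : V2 ∈ crossSet (P d1) (P e1) (P e2) j2 := by
    rw [hV2]; exact Set.mem_singleton _
  obtain ⟨hV2s1, hV2s2⟩ := hV2mem
  obtain ⟨w1', hw1'F, hV1w'⟩ := hVdecomp _ _ _ _ (hPmem i1) (hPmem it) hV1s1
  obtain ⟨w1, hw1F, hV1w⟩ := hVdecomp _ _ _ _ (hPmem i1) (hPmem i2) hV1s2
  obtain ⟨w2', hw2'F, hV2w'⟩ := hVdecomp _ _ _ _ (hPmem d1) (hPmem e1) hV2s1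
  obtain ⟨w2, hw2F, hV2w⟩ := hVdecomp _ _ _ _ (hPmem d1) (hPmem e2) hV2s2
  -- all translates of `V1` by multiples of `P i1` lie on `nu1`
  have hj1Q : (0 : ℚ) < (j1 : ℚ) := by exact_mod_cast hj1
  have hj2Q : (0 : ℚ) < (j2 : ℚ) := by exact_mod_cast hj2
  have hCmem1 : ∀ k : ℕ, V1 + (k : ℚ) • P i1 ∈ nu1 := by
    intro k
    have h1 := segment_translate' (r := (j1 : ℚ)) (k := (k : ℚ)) (m := ((j1 + k : ℕ) : ℚ))
      hj1Q (Nat.cast_nonneg k) (by push_cast; ring) hV1s1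
    have h2 := segment_translate' (r := (j1 : ℚ) + 1) (k := (k : ℚ))
      (m := ((j1 + k : ℕ) : ℚ) + 1) (by positivity) (Nat.cast_nonneg k)
      (by push_cast; ring) hV1s2
    exact hnu1 (j1 + k) (Nat.le_add_right _ _) ⟨h1, h2⟩
  have hCmem2 : ∀ k : ℕ, V2 + (k : ℚ) • P d1 ∈ nu2 := by
    intro k
    have h1 := segment_translate' (r := (j2 : ℚ)) (k := (k : ℚ)) (m := ((j2 + k : ℕ) : ℚ))
      hj2Q (Nat.cast_nonneg k) (by push_cast; ring) hV2s1
    have h2 := segment_translate' (r := (j2 : ℚ) + 1) (k := (k : ℚ))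
      (m := ((j2 + k : ℕ) : ℚ) + 1) (by positivity) (Nat.cast_nonneg k)
      (by push_cast; ring) hV2s2
    exact hnu2 (j2 + k) (Nat.le_add_right _ _) ⟨h1, h2⟩
  have hP1ne : P i1 ≠ 0 := by
    intro h
    rw [h, smul_zero] at hpi1
    exact htoQne v1 hv1ne hpi1
  have hPdne : P d1 ≠ 0 := by
    intro h
    rw [h, smul_zero] at hpi2
    exact htoQne v2 hv2ne hpi2
  have hQmem : Qpt ∈ nu1 ∩ nu2 := by rw [hQ]; exact Set.mem_singleton _
  -- `Qpt` lies on the line through `V1` with direction `P i1`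
  have hline : ∀ (nu : Set (Fin 2 → ℚ)) (V D : Fin 2 → ℚ), IsLine nu → D ≠ 0 →
      (∀ k : ℕ, V + (k : ℚ) • D ∈ nu) → Qpt ∈ nu → ∃ σ : ℚ, Qpt = V + σ • D := by
    intro nu V D hl hDne hC hQm
    obtain ⟨pp, dd, hdd, hnueq⟩ := hl
    have hV0 : V ∈ nu := by simpa using hC 0
    have hV1' : V + D ∈ nu := by simpa using hC 1
    rw [hnueq] at hV0 hV1' hQm
    obtain ⟨s0, hs0⟩ := hV0
    obtain ⟨s1', hs1'⟩ := hV1'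
    obtain ⟨sq, hsq⟩ := hQm
    have hDdd : D = (s1' - s0) • dd := by
      funext k
      have h0 := congrFun hs0 k; have h1 := congrFun hs1' k
      simp only [Pi.add_apply, Pi.smul_apply, smul_eq_mul] at h0 h1 ⊢
      linear_combination h1 - h0
    have hs10 : s1' - s0 ≠ 0 := by
      intro h; apply hDne; rw [hDdd, h, zero_smul]
    refine ⟨(sq - s0) / (s1' - s0), ?_⟩
    funext k
    have h0 := congrFun hs0 k; have hq := congrFun hsq k; have hp := congrFun hDdd k
    simp only [Pi.add_apply, Pi.smul_apply, smul_eq_mul] at h0 hq hp ⊢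
    field_simp
    linear_combination (s1' - s0) * hq - (s1' - s0) * h0 - (sq - s0) * hp
  obtain ⟨σ1, hQeq1⟩ := hline nu1 V1 (P i1) hl1 hP1ne hCmem1 hQmem.1
  obtain ⟨σ2, hQeq2⟩ := hline nu2 V2 (P d1) hl2 hPdne hCmem2 hQmem.2
  -- the main finiteness bound
  set Bnd : ℚ := max (Qpt 0 - σ1 * P i1 0 - σ2 * P d1 0)
    (Qpt 1 - σ1 * P i1 1 - σ2 * P d1 1) with hBnddef
  have key : ∀ x, x ∈ UpsMain Qpt F \ S →
      x ∈ Set.Icc (0 : Fin 2 → ℕ) (fun _ => ⌈Bnd⌉₊) := by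
    rintro x ⟨⟨y, hy, hxy⟩, hxS⟩
    obtain ⟨a, b, ha, hb, hyab⟩ := hconeF hy
    by_cases h1 : 0 ≤ σ1 + a
    · exfalso
      apply hxS
      rw [hS]
      refine cover' hFconv (hPmem i1) (hPmem d1) hw1F hw1'F hj1 hV1w hV1w' h1 hb ?_
      funext k
      have h2' := congrFun hxy k
      have h3 := congrFun hyab k
      have hQk := congrFun hQeq1 k
      simp only [Pi.add_apply, Pi.smul_apply, smul_eq_mul] at h2' h3 hQk ⊢
      linear_combination h2' + h3 + hQk
    by_cases h2 : 0 ≤ σ2 + b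
    · exfalso
      apply hxS
      rw [hS]
      refine cover' hFconv (hPmem d1) (hPmem i1) hw2F hw2'F hj2 hV2w hV2w' h2 ha ?_
      funext k
      have h2' := congrFun hxy k
      have h3 := congrFun hyab k
      have hQk := congrFun hQeq2 k
      simp only [Pi.add_apply, Pi.smul_apply, smul_eq_mul] at h2' h3 hQk ⊢
      linear_combination h2' + h3 + hQk
    push_neg at h1 h2
    refine ⟨fun k => Nat.zero_le _, fun k => ?_⟩
    have hxk : (x k : ℚ) = Qpt k + a * P i1 k + b * P d1 k := by
      have h2' := congrFun hxy k
      have h3 := congrFun hyab k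
      simp only [toQ, Pi.add_apply, Pi.smul_apply, smul_eq_mul] at h2' h3
      linear_combination h2' + h3
    have hle' : (x k : ℚ) ≤ Qpt k - σ1 * P i1 k - σ2 * P d1 k := by
      have hp1 := hpos i1 k
      have hpd := hpos d1 k
      have e1 : a * P i1 k ≤ -σ1 * P i1 k := by nlinarith
      have e2 : b * P d1 k ≤ -σ2 * P d1 k := by nlinarith
      rw [hxk]; linarith
    have hle : (x k : ℚ) ≤ Bnd := by
      refine hle'.trans ?_
      fin_cases k
      · exact le_max_left _ _
      · exact le_max_right _ _
    have hceil := Nat.le_ceil Bnd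
    exact_mod_cast hle.trans hceil
  have hfin1 : (UpsMain Qpt F \ S).Finite := (Set.finite_Icc _ _).subset key
  refine ⟨hfin1, hfin1.subset ?_⟩
  rintro x ⟨hx, hxbar⟩
  refine ⟨hx, fun hxS => hxbar ?_⟩
  intro g hg
  rw [← hG.1] at hxS ⊢
  exact AddSubmonoid.add_mem _ hxS (AddSubmonoid.subset_closure hg)
end
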